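/- Let D be a resolvable 2-(qk, k, λ) design with q > 1, k > 0. Then the number of blocks satisfies b ≥ v + r − 1, where v = qk and r = λ(v−1)/(k−1) is the replication number (Bose's inequality). -/

import Mathlib

open Finset
open Matrix

/-- Bose's inequality: A resolvable 2-(qk, k, λ) design with `q > 1`,
`k > 0` and `r` parallel classes satisfies `b ≥ v + r - 1`, i.e. `v + r ≤ b + 1`. -/
theorem bose_inequality (q k lam b r : ℕ) (hq : 1 < q) (hk : 0 < k) (hlam : 1 ≤ lam)
    (B : Fin b → Finset (Fin (q * k)))
    (hsize : ∀ j, (B j).card = k)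
    (hpair : ∀ x y : Fin (q * k), x ≠ y →
      (Finset.univ.filter fun j => x ∈ B j ∧ y ∈ B j).card = lam)
    (res : Fin b → Fin r)
    (hres : ∀ (c : Fin r) (x : Fin (q * k)), ∃! j, res j = c ∧ x ∈ B j) :
    q * k + r ≤ b + 1 := by
  have hv2 : 2 ≤ q * k := by nlinarith
  -- replication number
  have hrep : ∀ x : Fin (q * k), (univ.filter fun j => x ∈ B j).card = r := by
    intro x
    rw [← Fintype.card_fin r, ← Finset.card_univ]
    apply Finset.card_bij (fun j _ => res j)
    · intro a ha; exact mem_univ _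
    · intro j1 h1 j2 h2 hres12
      simp only [mem_filter] at h1 h2
      obtain ⟨j, _, huniq⟩ := hres (res j1) x
      have e1 := huniq j1 ⟨rfl, h1.2⟩
      have e2 := huniq j2 ⟨hres12.symm, h2.2⟩
      rw [e1, e2]
    · intro c _
      obtain ⟨j, ⟨hjc, hjx⟩, _⟩ := hres c x
      exact ⟨j, by simp [hjx], hjc⟩
  -- k ≥ 2
  have hk2 : 2 ≤ k := by
    by_contra h
    have hk1 : k = 1 := by omega
    have hxy : (⟨0, by omega⟩ : Fin (q * k)) ≠ ⟨1, by omega⟩ := by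
      simp [Fin.ext_iff]
    have := hpair _ _ hxy
    have hne : (univ.filter fun j => (⟨0, by omega⟩ : Fin (q*k)) ∈ B j ∧ (⟨1, by omega⟩ : Fin (q*k)) ∈ B j).Nonempty := by
      rw [← Finset.card_pos, this]; omega
    obtain ⟨j, hj⟩ := hne
    simp only [mem_filter] at hj
    have h2 : 2 ≤ (B j).card := Finset.one_lt_card.mpr ⟨_, hj.2.1, _, hj.2.2, hxy⟩
    rw [hsize j] at h2; omega
  -- double counting: r * (k-1) = lam * (q*k - 1)
  have hcount : r * (k - 1) = lam * (q * k - 1) := by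
    have x := (⟨0, by omega⟩ : Fin (q * k))
    have key : ∑ y ∈ univ.erase x, (univ.filter fun j => x ∈ B j ∧ y ∈ B j).card
        = lam * (q * k - 1) := by
      rw [Finset.sum_congr rfl (fun y hy => hpair x y (by simp at hy; exact fun h => hy h.symm))]
      simp [Finset.card_erase_of_mem, mul_comm]
    have swap : ∑ y ∈ univ.erase x, (univ.filter fun j => x ∈ B j ∧ y ∈ B j).card
        = ∑ j : Fin b, if x ∈ B j then ((B j).erase x).card else 0 := by
      simp only [Finset.card_filter]
      rw [Finset.sum_comm]
      apply Finset.sum_congr rfl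
      intro j _
      by_cases hx : x ∈ B j
      · simp only [hx, true_and, if_true]
        rw [← Finset.card_filter]
        congr 1
        ext y
        simp [Finset.mem_erase, and_comm]
      · simp [hx]
    have rhs : ∑ j : Fin b, (if x ∈ B j then ((B j).erase x).card else 0) = r * (k - 1) := by
      rw [← Finset.sum_filter]
      rw [Finset.sum_congr rfl (fun j hj => by
        rw [Finset.card_erase_of_mem (Finset.mem_filter.mp hj).2, hsize j])]
      rw [Finset.sum_const, hrep x, smul_eq_mul]
    omega
  -- r > lam
  have hrl : lam < r := by
    have hqk : k + 2 ≤ q * k := by nlinarith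
    have hlt : k - 1 < q * k - 1 := by omega
    by_contra h
    push_neg at h
    have h1 : lam * (q * k - 1) ≤ lam * (k - 1) := by
      calc lam * (q * k - 1) = r * (k - 1) := hcount.symm
        _ ≤ lam * (k - 1) := Nat.mul_le_mul_right _ h
    have h2 : lam * (k - 1) < lam * (q * k - 1) :=
      mul_lt_mul_of_pos_left hlt (by omega)
    omega
  classical
  -- incidence matrix
  set N : Matrix (Fin (q * k)) (Fin b) ℝ := fun x j => if x ∈ B j then 1 else 0 with hN
  set T : (Fin b → ℝ) →ₗ[ℝ] (Fin (q * k) → ℝ) := N.mulVecLin with hT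
  have hM : ∀ x y, (N * Nᵀ) x y = if x = y then (r : ℝ) else (lam : ℝ) := by
    intro x y
    rcases eq_or_ne x y with rfl | hxy
    · simp only [if_pos rfl, Matrix.mul_apply, Matrix.transpose_apply]; simp only [hN]
      rw [show (∑ j, (if x ∈ B j then (1:ℝ) else 0) * (if x ∈ B j then (1:ℝ) else 0))
          = ∑ j, (if x ∈ B j then (1:ℝ) else 0) from by
        apply Finset.sum_congr rfl; intro j _; by_cases h : x ∈ B j <;> simp [h]]
      rw [Finset.sum_boole, hrep x]; simp
    · simp only [if_neg hxy, Matrix.mul_apply, Matrix.transpose_apply]; simp only [hN]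
      rw [show (∑ j, (if x ∈ B j then (1:ℝ) else 0) * (if y ∈ B j then (1:ℝ) else 0))
          = ∑ j, (if x ∈ B j ∧ y ∈ B j then (1:ℝ) else 0) from by
        apply Finset.sum_congr rfl; intro j _
        by_cases h1 : x ∈ B j <;> by_cases h2 : y ∈ B j <;> simp [h1, h2]]
      rw [Finset.sum_boole]
      norm_cast
      exact hpair x y hxy
  have hMapp : ∀ (g : Fin (q * k) → ℝ) (x), (N * Nᵀ).mulVec g x
      = ((r : ℝ) - lam) * g x + lam * ∑ y, g y := by
    intro g x
    have h1 : (N * Nᵀ).mulVec g x = ∑ y, (if x = y then (r : ℝ) else lam) * g y := by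
      simp only [Matrix.mulVec, dotProduct]
      exact Finset.sum_congr rfl fun y _ => by rw [hM]
    rw [h1]
    have h2 : ∀ y, (if x = y then (r : ℝ) else lam) * g y
        = (if x = y then ((r : ℝ) - lam) * g y else 0) + lam * g y := by
      intro y; by_cases h : x = y <;> simp [h] <;> ring
    rw [Finset.sum_congr rfl fun y _ => h2 y, Finset.sum_add_distrib,
      Finset.sum_ite_eq, if_pos (Finset.mem_univ x), ← Finset.mul_sum]
  have hrlR : (lam : ℝ) < r := by exact_mod_cast hrl
  have hMinj : Function.Injective (N * Nᵀ).mulVecLin := by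
    rw [← LinearMap.ker_eq_bot, LinearMap.ker_eq_bot']
    intro g hg
    have hgv : ∀ x, (N * Nᵀ).mulVec g x = 0 := fun x => congrFun hg x
    have hS : ∑ y, g y = 0 := by
      have hsum : ∑ x, (N * Nᵀ).mulVec g x = 0 := by
        rw [Finset.sum_congr rfl fun x _ => hgv x]; simp
      rw [Finset.sum_congr rfl fun x _ => hMapp g x, Finset.sum_add_distrib,
        ← Finset.mul_sum, Finset.sum_const, Finset.card_univ, Fintype.card_fin] at hsum
      set S := ∑ y, g y
      have hc : (((r : ℝ) - lam) + (q * k : ℕ) * lam) * S = 0 := by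
        rw [nsmul_eq_mul] at hsum; push_cast at hsum ⊢; linarith
      have hcpos : (((r : ℝ) - lam) + (q * k : ℕ) * lam) > 0 := by
        have : (0:ℝ) ≤ (q * k : ℕ) * lam := by positivity
        linarith
      rcases mul_eq_zero.mp hc with h | h
      · linarith
      · exact h
    funext x
    have := hgv x
    rw [hMapp g x, hS, mul_zero, add_zero] at this
    rcases mul_eq_zero.mp this with h | h
    · linarith
    · exact h
  have hTsurj : Function.Surjective T := by
    intro h
    obtain ⟨g, hg⟩ := (LinearMap.injective_iff_surjective.mp hMinj) h
    refine ⟨Nᵀ.mulVec g, ?_⟩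
    rw [hT, Matrix.mulVecLin_apply, Matrix.mulVec_mulVec]
    exact hg
  -- kernel vectors from parallel classes
  have hr1 : 1 ≤ r := by omega
  let c0 : Fin r := ⟨0, by omega⟩
  let w : Fin r → Fin b → ℝ := fun c j => if res j = c then 1 else 0
  have hwT : ∀ c : Fin r, T (w c) = fun _ => (1:ℝ) := by
    intro c
    funext x
    obtain ⟨j0, ⟨hj0c, hj0x⟩, huniq⟩ := hres c x
    have hfil : univ.filter (fun j => x ∈ B j ∧ res j = c) = {j0} := by
      ext j
      simp only [Finset.mem_filter, Finset.mem_univ, true_and, Finset.mem_singleton]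
      constructor
      · rintro ⟨h1, h2⟩; exact huniq j ⟨h2, h1⟩
      · rintro rfl; exact ⟨hj0x, hj0c⟩
    show (N.mulVec (w c)) x = 1
    simp only [Matrix.mulVec, dotProduct, hN, w]
    rw [show (∑ j, (if x ∈ B j then (1:ℝ) else 0) * (if res j = c then 1 else 0))
        = ∑ j, (if x ∈ B j ∧ res j = c then (1:ℝ) else 0) from
      Finset.sum_congr rfl fun j _ => by
        by_cases h1 : x ∈ B j <;> by_cases h2 : res j = c <;> simp [h1, h2]]
    rw [Finset.sum_boole, hfil]
    simp
  have hmemker : ∀ c : Fin r, w c - w c0 ∈ LinearMap.ker T := by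
    intro c
    rw [LinearMap.mem_ker, map_sub, hwT, hwT, sub_self]
  let x0 : Fin (q * k) := ⟨0, by omega⟩
  have hindep : LinearIndependent ℝ (fun c : {c : Fin r // c ≠ c0} =>
      (⟨w c.val - w c0, hmemker c.val⟩ : LinearMap.ker T)) := by
    apply LinearIndependent.of_comp (LinearMap.ker T).subtype
    rw [Fintype.linearIndependent_iff]
    intro g hg c
    obtain ⟨j, ⟨hjc, _⟩, _⟩ := hres c.val x0
    have hj : ∀ c' : {c : Fin r // c ≠ c0},
        (w c'.val - w c0) j = if c' = c then 1 else 0 := by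
      intro c'
      have e1 : w c'.val j = if c' = c then 1 else 0 := by
        simp only [w]
        rcases eq_or_ne c' c with rfl | h
        · rw [if_pos hjc, if_pos rfl]
        · rw [if_neg (fun hh => h (Subtype.ext (hjc.symm.trans hh).symm)), if_neg h]
      have e2 : w c0 j = 0 := by
        simp only [w]
        exact if_neg (fun hh => c.prop (hjc.symm.trans hh))
      rw [Pi.sub_apply, e1, e2, sub_zero]
    have h1 : ∑ c' : {c : Fin r // c ≠ c0}, g c' * ((w c'.val - w c0) j) = 0 := by
      have h2 := congrFun hg j
      simpa [Finset.sum_apply, Pi.smul_apply, smul_eq_mul] using h2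
    rw [Finset.sum_congr rfl (fun c' _ => by rw [hj c'])] at h1
    simp only [mul_ite, mul_one, mul_zero] at h1
    rwa [Finset.sum_ite_eq' Finset.univ c g, if_pos (Finset.mem_univ c)] at h1
  have hcard : Fintype.card {c : Fin r // c ≠ c0} = r - 1 := by
    have h := Fintype.card_subtype_compl (fun c : Fin r => c = c0)
    simpa [Fintype.card_subtype_eq] using h
  have hker : r - 1 ≤ Module.finrank ℝ (LinearMap.ker T) := by
    have h := hindep.fintype_card_le_finrank
    rwa [hcard] at h
  have hrange : Module.finrank ℝ (LinearMap.range T) = q * k := by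
    rw [LinearMap.range_eq_top.mpr hTsurj, finrank_top]
    exact Module.finrank_fin_fun ℝ
  have hrank := LinearMap.finrank_range_add_finrank_ker T
  rw [hrange, Module.finrank_fin_fun ℝ] at hrank
  omega
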